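/- arXiv:1110.0812 — 5 statements merged into one kernel-verified Lean document; each statement's English description precedes it below -/
import Mathlib

section
/- Let $\nu \geq 2$ and let $2 \leq n, m \leq \nu$ be integers. Define the $(n+m-2) \times (m-1)$ matrix $A(\nu;n,m)$ whose $i$-th row (for $1 \leq i \leq m-1$) has entries $\nu-n+1, \nu-n+2, \ldots, \nu$ placed in consecutive columns $i, i+1, \ldots, i+n-1$ and zeros elsewhere, and form the square $(n+m-2) \times (n+m-2)$ matrix $X(\nu;n,m)$ by stacking $A(\nu;n,m)$ on top of $A(\nu;m,n)$. If one marks $n+m-2$ nonzero entries of $X(\nu;n,m)$ such that each row and each column contains exactly one marked entry, then the sum of the marked entries always equals $(\nu-n+1)(m-1) + \nu(n-1)$, independently of the choice of marking. -/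
/-- The matrix `X(ν;n,m)` obtained by stacking `A(ν;n,m)` on top of `A(ν;m,n)`:
the first `m-1` rows are shifted copies of `(ν-n+1, …, ν)`, the remaining `n-1`
rows are shifted copies of `(ν-m+1, …, ν)`. -/
def Xmat (ν n m : ℕ) : Matrix (Fin (n + m - 2)) (Fin (n + m - 2)) ℤ := fun i j =>
  if (i : ℕ) < m - 1 then
    (if (i : ℕ) ≤ (j : ℕ) ∧ (j : ℕ) ≤ (i : ℕ) + (n - 1) then
      (ν : ℤ) - (n : ℤ) + 1 + (((j : ℕ) - (i : ℕ) : ℕ) : ℤ) else 0)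
  else
    (if (i : ℕ) - (m - 1) ≤ (j : ℕ) ∧ (j : ℕ) ≤ (i : ℕ) - (m - 1) + (m - 1) then
      (ν : ℤ) - (m : ℤ) + 1 + (((j : ℕ) - ((i : ℕ) - (m - 1)) : ℕ) : ℤ) else 0)

/-- any marking of `X(ν;n,m)` by nonzero entries, one per row and per
column, has entry sum `(ν-n+1)(m-1) + ν(n-1)`. -/
theorem stmt_3 (ν n m : ℕ) (hν : 2 ≤ ν) (hn2 : 2 ≤ n) (hnν : n ≤ ν)
    (hm2 : 2 ≤ m) (hmν : m ≤ ν)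
    (σ : Equiv.Perm (Fin (n + m - 2))) (hσ : ∀ i, Xmat ν n m i (σ i) ≠ 0) :
    ∑ i, Xmat ν n m i (σ i)
      = ((ν : ℤ) - (n : ℤ) + 1) * ((m : ℤ) - 1) + (ν : ℤ) * ((n : ℤ) - 1) := by
  have hm1 : ((m - 1 : ℕ) : ℤ) = (m : ℤ) - 1 := by
    have : 1 ≤ m := by omega
    push_cast [Nat.cast_sub this]; ring
  have key : ∀ i : Fin (n + m - 2), Xmat ν n m i (σ i)
      = (if (i : ℕ) < m - 1 then (ν : ℤ) - (n : ℤ) + 1 else (ν : ℤ))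
        + ((σ i : ℕ) : ℤ) - ((i : ℕ) : ℤ) := by
    intro i
    have h := hσ i
    unfold Xmat at h ⊢
    by_cases hi : (i : ℕ) < m - 1
    · rw [if_pos hi] at h ⊢
      by_cases hb : (i : ℕ) ≤ (σ i : ℕ) ∧ (σ i : ℕ) ≤ (i : ℕ) + (n - 1)
      · rw [if_pos hb, if_pos hi, Nat.cast_sub hb.1]; ring
      · exact absurd (if_neg hb) h
    · rw [if_neg hi] at h ⊢
      by_cases hb : (i : ℕ) - (m - 1) ≤ (σ i : ℕ) ∧
          (σ i : ℕ) ≤ (i : ℕ) - (m - 1) + (m - 1)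
      · rw [if_pos hb, if_neg hi]
        have h1 : m - 1 ≤ (i : ℕ) := by omega
        rw [Nat.cast_sub hb.1, Nat.cast_sub h1, hm1]
        ring
      · exact absurd (if_neg hb) h
  rw [Finset.sum_congr rfl (fun i _ => key i)]
  simp only [Finset.sum_sub_distrib, Finset.sum_add_distrib]
  rw [Equiv.sum_comp σ (fun j : Fin (n + m - 2) => ((j : ℕ) : ℤ))]
  rw [add_sub_cancel_right]
  rw [Fin.sum_univ_eq_sum_range
    (fun i => if i < m - 1 then (ν : ℤ) - (n : ℤ) + 1 else (ν : ℤ))]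
  have hN : m - 1 ≤ n + m - 2 := by omega
  rw [Finset.range_eq_Ico, ← Finset.sum_Ico_consecutive _ (Nat.zero_le (m - 1)) hN]
  rw [Finset.sum_congr rfl (fun i hi => if_pos (Finset.mem_Ico.mp hi).2),
    Finset.sum_congr rfl
      (fun i hi => if_neg (by have := (Finset.mem_Ico.mp hi).1; omega))]
  rw [Finset.sum_const, Finset.sum_const, Nat.card_Ico, Nat.card_Ico]
  have h2 : n + m - 2 - (m - 1) = n - 1 := by omega
  have h3 : ((n - 1 : ℕ) : ℤ) = (n : ℤ) - 1 := by
    have : 1 ≤ n := by omega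
    push_cast [Nat.cast_sub this]; ring
  rw [h2, nsmul_eq_mul, nsmul_eq_mul, Nat.sub_zero, hm1, h3]
  ring
end

section
/- Let $M \geq 1$ be a real number and let $2 \leq n, m \leq \nu$ be fixed integers. Let $P_1(Z) = \sum_{i=0}^{n-1} a_i Z^i$ and $P_2(Z) = \sum_{i=0}^{m-1} b_i Z^i$ be integer polynomials with $a_{n-1}, b_{m-1} \neq 0$ and $|a_i|, |b_i| < M^{\nu - i}$ for $0 \leq i \leq \nu - 1$. Then the resultant satisfies $|\mathrm{Res}(P_1, P_2)| \leq C(\nu) M^{\nu^2 - 1}$ for some constant $C(\nu)$ depending only on $\nu$. -/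
/-- The Sylvester matrix of `P₁ = ∑_{i<n} a i Z^i` (degree `n-1`) and
`P₂ = ∑_{i<m} b i Z^i` (degree `m-1`): `m-1` rows of shifted coefficients of `P₁`
followed by `n-1` rows of shifted coefficients of `P₂`. -/
def sylvesterMat (n m : ℕ) (a b : ℕ → ℤ) :
    Matrix (Fin (n + m - 2)) (Fin (n + m - 2)) ℤ := fun i j =>
  if (i : ℕ) < m - 1 then
    (if (i : ℕ) ≤ (j : ℕ) ∧ (j : ℕ) ≤ (i : ℕ) + (n - 1) then
      a ((i : ℕ) + (n - 1) - (j : ℕ)) else 0)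
  else
    (if (i : ℕ) - (m - 1) ≤ (j : ℕ) ∧ (j : ℕ) ≤ (i : ℕ) - (m - 1) + (m - 1) then
      b ((i : ℕ) - (m - 1) + (m - 1) - (j : ℕ)) else 0)

/-- if `|a_i|, |b_i| < M^{ν-i}` and the leading coefficients are
nonzero, then `|Res(P₁,P₂)| ≤ C(ν) M^{ν²-1}`. -/
theorem stmt_4 (ν : ℕ) (hν : 2 ≤ ν) :
    ∃ C : ℝ, 0 < C ∧ ∀ n m : ℕ, 2 ≤ n → n ≤ ν → 2 ≤ m → m ≤ ν →
      ∀ M : ℝ, 1 ≤ M → ∀ a b : ℕ → ℤ,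
        a (n - 1) ≠ 0 → b (m - 1) ≠ 0 →
        (∀ i, i ≤ ν - 1 → (|a i| : ℝ) < M ^ (ν - i)) →
        (∀ i, i ≤ ν - 1 → (|b i| : ℝ) < M ^ (ν - i)) →
        (|(sylvesterMat n m a b).det| : ℝ) ≤ C * M ^ (ν ^ 2 - 1) := by
  refine ⟨(Nat.factorial (2*ν) : ℝ), by positivity, ?_⟩
  intro n m hn2 hnν hm2 hmν M hM a b ha0 hb0 ha hb
  have hM0 : (0:ℝ) < M := lt_of_lt_of_le one_pos hM
  set N := n + m - 2 with hN
  set A := sylvesterMat n m a b with hAdef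
  set B : Matrix (Fin N) (Fin N) ℝ := A.map (Int.cast : ℤ → ℝ) with hBdef
  have hdet : ((A.det : ℤ) : ℝ) = B.det := by
    have h := RingHom.map_det (Int.castRingHom ℝ) A
    simpa [RingHom.mapMatrix_apply] using h
  -- per-permutation bound
  have key : ∀ σ : Equiv.Perm (Fin N), |∏ i, B (σ i) i| ≤ M ^ (ν^2 - 1) := by
    intro σ
    by_cases hz : ∀ i, A (σ i) i ≠ 0
    · -- each entry is in the band
      let e : Fin N → Fin N → ℕ := fun i j =>
        if (i:ℕ) < m - 1 then ν - ((i:ℕ) + (n-1) - (j:ℕ)) else ν - ((i:ℕ) - (j:ℕ))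
      have hband : ∀ i : Fin N,
          if ((σ i :ℕ)) < m-1 then (((σ i:ℕ)) ≤ (i:ℕ) ∧ (i:ℕ) ≤ ((σ i:ℕ)) + (n-1))
          else (((σ i:ℕ)) - (m-1) ≤ (i:ℕ) ∧ (i:ℕ) ≤ ((σ i:ℕ))) := by
        intro i
        have hzi := hz i
        by_cases hi : ((σ i:ℕ)) < m-1
        · simp only [hAdef, sylvesterMat, hi, if_true] at hzi
          simp only [hi, if_true]
          by_contra hc
          rw [if_neg hc] at hzi; exact hzi rfl
        · simp only [hAdef, sylvesterMat, hi, if_false] at hzi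
          simp only [hi, if_false]
          by_contra hc
          rw [if_neg ?_] at hzi
          · exact hzi rfl
          · omega
      -- entrywise bound
      have hentry : ∀ i : Fin N, |B (σ i) i| ≤ M ^ (e (σ i) i) := by
        intro i
        have hbi := hband i
        by_cases hi : ((σ i:ℕ)) < m-1
        · rw [if_pos hi] at hbi
          obtain ⟨h1, h2⟩ := hbi
          have hidx : (σ i:ℕ) + (n-1) - (i:ℕ) ≤ ν - 1 := by omega
          have := ha _ hidx
          have hB : B (σ i) i = ((a ((σ i:ℕ) + (n-1) - (i:ℕ)) : ℤ) : ℝ) := by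
            simp [hBdef, hAdef, sylvesterMat, hi, h1, h2, Matrix.map_apply]
          rw [hB]
          have he : e (σ i) i = ν - ((σ i:ℕ) + (n-1) - (i:ℕ)) := by simp [e, hi]
          rw [he]
          exact le_of_lt this
        · rw [if_neg hi] at hbi
          obtain ⟨h1, h2⟩ := hbi
          have hidx : (σ i:ℕ) - (i:ℕ) ≤ ν - 1 := by omega
          have := hb _ hidx
          have hB : B (σ i) i = ((b ((σ i:ℕ) - (m-1) + (m-1) - (i:ℕ)) : ℤ) : ℝ) := by
            have : (σ i:ℕ) - (m-1) ≤ (i:ℕ) ∧ (i:ℕ) ≤ (σ i:ℕ) - (m-1) + (m-1) := by omega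
            simp [hBdef, hAdef, sylvesterMat, hi, this, Matrix.map_apply]
          rw [hB]
          have hidx2 : (σ i:ℕ) - (m-1) + (m-1) - (i:ℕ) = (σ i:ℕ) - (i:ℕ) := by omega
          have he : e (σ i) i = ν - ((σ i:ℕ) - (i:ℕ)) := by simp [e, hi]
          rw [he, hidx2]
          exact le_of_lt this
      -- exponent sum
      have hexp : ∑ i, e (σ i) i ≤ ν^2 - 1 := by
        have hcast : ((∑ i, e (σ i) i : ℕ) : ℤ) = (N:ℤ) * ν - (n-1)*(m-1) := by
          push_cast
          have hterm : ∀ i : Fin N, ((e (σ i) i : ℕ) : ℤ)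
              = (ν:ℤ) - (((σ i:ℕ):ℤ) - (i:ℕ)) - (if ((σ i:ℕ)) < m-1 then ((n:ℤ)-1) else 0) := by
            intro i
            have hbi := hband i
            by_cases hi : ((σ i:ℕ)) < m-1
            · rw [if_pos hi] at hbi
              simp only [e, hi, if_true]
              push_cast [hbi.1, hbi.2]
              omega
            · rw [if_neg hi] at hbi
              simp only [e, hi, if_false]
              have h1 := hbi.1
              have h2 := hbi.2
              have hm' : m - 1 ≤ ν := by omega
              push_cast
              omega
          rw [Finset.sum_congr rfl (fun i _ => hterm i)]
          rw [Finset.sum_sub_distrib, Finset.sum_sub_distrib]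
          have h1 : ∑ i : Fin N, (((σ i:ℕ):ℤ) - ((i:ℕ):ℤ)) = 0 := by
            rw [Finset.sum_sub_distrib]
            rw [Equiv.sum_comp σ (fun i : Fin N => ((i:ℕ):ℤ))]
            ring
          have h2 : ∑ i : Fin N, (if ((σ i:ℕ)) < m-1 then ((n:ℤ)-1) else 0)
              = ((m:ℤ)-1) * ((n:ℤ)-1) := by
            rw [Equiv.sum_comp σ (fun j : Fin N => if ((j:ℕ)) < m-1 then ((n:ℤ)-1) else 0)]
            rw [Fin.sum_univ_eq_sum_range (fun j => if j < m-1 then ((n:ℤ)-1) else 0) N]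
            rw [← Finset.sum_subset (Finset.range_subset_range.mpr (by omega : m-1 ≤ N))
              (fun x _ hx => by
                rw [Finset.mem_range, not_lt] at hx
                rw [if_neg (by omega)])]
            have hc : (∑ x ∈ Finset.range (m - 1), if x < m - 1 then ((n:ℤ) - 1) else 0)
                = ∑ _x ∈ Finset.range (m-1), ((n:ℤ)-1) :=
              Finset.sum_congr rfl (fun x hx => if_pos (Finset.mem_range.mp hx))
            rw [hc, Finset.sum_const, Finset.card_range, nsmul_eq_mul]
            push_cast [Nat.cast_sub (by omega : 1 ≤ m)]
            ring
          rw [h1, h2]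
          simp
          ring
        have hineq : (N:ℤ) * ν - ((n:ℤ)-1)*((m:ℤ)-1) ≤ (ν:ℤ)^2 - 1 := by
          have hNeq : (N:ℤ) = (n:ℤ) + (m:ℤ) - 2 := by
            rw [hN]; push_cast [Nat.cast_sub (by omega : 2 ≤ n + m)]; ring
          rw [hNeq]
          nlinarith [(by exact_mod_cast hnν : (n:ℤ) ≤ ν),
            (by exact_mod_cast hmν : (m:ℤ) ≤ ν), (by exact_mod_cast hn2 : (2:ℤ) ≤ n),
            (by exact_mod_cast hm2 : (2:ℤ) ≤ m)]
        have hsq : ((ν^2 : ℕ) : ℤ) = (ν:ℤ)^2 := by push_cast; ring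
        have hν2 : 1 ≤ ν^2 := Nat.one_le_pow _ _ (by omega)
        omega
      calc |∏ i, B (σ i) i| = ∏ i, |B (σ i) i| := by rw [Finset.abs_prod]
        _ ≤ ∏ i, M ^ (e (σ i) i) := Finset.prod_le_prod (fun i _ => abs_nonneg _)
            (fun i _ => hentry i)
        _ = M ^ (∑ i, e (σ i) i) := Finset.prod_pow_eq_pow_sum _ _ _
        _ ≤ M ^ (ν^2 - 1) := pow_le_pow_right₀ hM hexp
    · push_neg at hz
      obtain ⟨i, hi⟩ := hz
      have hBz : B (σ i) i = 0 := by simp [hBdef, Matrix.map_apply, hi]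
      have hp : (∏ j : Fin N, B (σ j) j) = 0 := Finset.prod_eq_zero (Finset.mem_univ i) hBz
      rw [hp, abs_zero]
      positivity
  -- assemble
  rw [hdet, Matrix.det_apply]
  calc |∑ σ : Equiv.Perm (Fin N), Equiv.Perm.sign σ • ∏ i, B (σ i) i|
      ≤ ∑ σ : Equiv.Perm (Fin N), |Equiv.Perm.sign σ • ∏ i, B (σ i) i| :=
        Finset.abs_sum_le_sum_abs _ _
    _ ≤ ∑ σ : Equiv.Perm (Fin N), M ^ (ν^2-1) := by
        refine Finset.sum_le_sum (fun σ _ => ?_)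
        rcases Int.units_eq_one_or (Equiv.Perm.sign σ) with h | h <;>
          simp [h, key σ, abs_neg]
    _ = (Nat.factorial N : ℝ) * M ^ (ν^2-1) := by
        rw [Finset.sum_const, Finset.card_univ, Fintype.card_perm, Fintype.card_fin,
          nsmul_eq_mul]
    _ ≤ (Nat.factorial (2*ν) : ℝ) * M ^ (ν^2-1) := by
        have hfac : (Nat.factorial N : ℝ) ≤ (Nat.factorial (2*ν) : ℝ) :=
          Nat.cast_le.mpr (Nat.factorial_le (by omega))
        exact mul_le_mul_of_nonneg_right hfac (by positivity)
end

section
/- Let $p \geq 37$ be a prime, $\kappa > 0$, and $\xi = \lfloor \sqrt{p} \rfloor$. Then any set $\mathcal{S} \subseteq \mathbb{F}_p$ of size $\#\mathcal{S} \geq 16 p^{2\kappa}$ contains pairwise disjoint subsets $\mathcal{D}_1, \ldots, \mathcal{D}_K$ and $\mathcal{E}_1, \ldots, \mathcal{E}_L$ such that: (i) each $\mathcal{D}_k$ and each $\mathcal{E}_\ell$ has cardinality at least $0.25\, p^{-\kappa} (\#\mathcal{S})^{1/2}$; (ii) each $\mathcal{D}_k$ is $\sqrt{p}/3$-spaced;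 (iii) each dilate $\xi \mathcal{E}_\ell$ is $\sqrt{p}/3$-spaced; and (iv) the set of elements of $\mathcal{S}$ not covered by the union of all $\mathcal{D}_k$ and $\mathcal{E}_\ell$ has size at most $2 p^{-\kappa} \#\mathcal{S}$. -/
set_option linter.unusedSectionVars false

namespace Stmt7Aux

attribute [local instance] Classical.propDecidable

noncomputable section

variable (p Δ : ℕ) (S : Finset (ZMod p)) (T : ℝ)

def clu (x : ZMod p) : ℕ := x.val / Δ

def rnk (x : ZMod p) : ℕ :=
  (S.filter (fun y => clu p Δ y = clu p Δ x ∧ y.val < x.val)).card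

def idx (x : ZMod p) : ℕ := (clu p Δ x) % 2 + 2 * rnk p Δ S x

def Eset (j : ℕ) : Finset (ZMod p) := S.filter (fun x => clu p Δ x = j)

def heavy (j : ℕ) : Prop := T ≤ ((Eset p Δ S j).card : ℝ)

def good (j : ℕ) : Prop := (j + 2) * Δ ≤ p + 1

def Dset (n : ℕ) : Finset (ZMod p) :=
  S.filter (fun x =>
    ¬ heavy p Δ S T (clu p Δ x) ∧ good p Δ (clu p Δ x) ∧ idx p Δ S x = n)

variable {p Δ : ℕ} [NeZero p] {S : Finset (ZMod p)} {T : ℝ}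

lemma clu_bounds (hΔ : 0 < Δ) {x : ZMod p} :
    clu p Δ x * Δ ≤ x.val ∧ x.val < clu p Δ x * Δ + Δ := by
  constructor
  · exact Nat.div_mul_le_self _ _
  · have h := (Nat.div_lt_iff_lt_mul hΔ).1 (Nat.lt_succ_self (clu p Δ x) : x.val / Δ < clu p Δ x + 1)
    calc x.val < (clu p Δ x + 1) * Δ := h
    _ = clu p Δ x * Δ + Δ := by ring

lemma rnk_injOn {x y : ZMod p} (hx : x ∈ S) (hy : y ∈ S)
    (hc : clu p Δ x = clu p Δ y) (hr : rnk p Δ S x = rnk p Δ S y) : x = y := by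
  rcases lt_trichotomy x.val y.val with h | h | h
  · exfalso
    have hss : S.filter (fun z => clu p Δ z = clu p Δ x ∧ z.val < x.val) ⊂
        S.filter (fun z => clu p Δ z = clu p Δ y ∧ z.val < y.val) := by
      refine Finset.ssubset_iff_of_subset ?_ |>.2 ?_
      · intro z hz
        simp only [Finset.mem_filter] at hz ⊢
        exact ⟨hz.1, hc ▸ hz.2.1, hz.2.2.trans h⟩
      · exact ⟨x, by simp [Finset.mem_filter, hx, hc, h], by simp [Finset.mem_filter]⟩
    have := Finset.card_lt_card hss
    simp only [rnk] at hr; omega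
  · exact ZMod.val_injective p h
  · exfalso
    have hss : S.filter (fun z => clu p Δ z = clu p Δ y ∧ z.val < y.val) ⊂
        S.filter (fun z => clu p Δ z = clu p Δ x ∧ z.val < x.val) := by
      refine Finset.ssubset_iff_of_subset ?_ |>.2 ?_
      · intro z hz
        simp only [Finset.mem_filter] at hz ⊢
        exact ⟨hz.1, hc ▸ hz.2.1, hz.2.2.trans h⟩
      · exact ⟨y, by simp [Finset.mem_filter, hy, hc.symm, h], by simp [Finset.mem_filter]⟩
    have := Finset.card_lt_card hss
    simp only [rnk] at hr; omega


lemma mem_Dset {n : ℕ} {x : ZMod p} :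
    x ∈ Dset p Δ S T n ↔ x ∈ S ∧ ¬ heavy p Δ S T (clu p Δ x) ∧
      good p Δ (clu p Δ x) ∧ idx p Δ S x = n := by
  simp [Dset, Finset.mem_filter, and_assoc]

lemma key_spacing (hΔ : 0 < Δ) {a b : ZMod p} (hab : a.val < b.val)
    (hcl : clu p Δ a + 2 ≤ clu p Δ b) (hg : good p Δ (clu p Δ b)) :
    Δ ≤ (b - a).valMinAbs.natAbs := by
  have h1 := clu_bounds hΔ (x := a)
  have h2 := clu_bounds hΔ (x := b)
  have hvs : (b - a).val = b.val - a.val := ZMod.val_sub (le_of_lt hab)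
  have hmul : (clu p Δ a + 2) * Δ ≤ clu p Δ b * Δ := Nat.mul_le_mul_right _ hcl
  have hgood : (clu p Δ b + 2) * Δ ≤ p + 1 := hg
  rw [ZMod.valMinAbs_natAbs_eq_min, hvs, Nat.le_min]
  simp only [add_mul] at hmul hgood
  omega

lemma dset_spaced (hΔ : 0 < Δ) {n : ℕ} {x y : ZMod p}
    (hx : x ∈ Dset p Δ S T n) (hy : y ∈ Dset p Δ S T n) (hne : x ≠ y) :
    Δ ≤ (x - y).valMinAbs.natAbs := by
  rw [mem_Dset] at hx hy
  have hpar : clu p Δ x % 2 = clu p Δ y % 2 := by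
    have h1 := hx.2.2.2; have h2 := hy.2.2.2
    simp only [idx] at h1 h2; omega
  have hcl : clu p Δ x ≠ clu p Δ y := by
    intro hc
    apply hne
    refine rnk_injOn hx.1 hy.1 hc ?_
    have h1 := hx.2.2.2; have h2 := hy.2.2.2
    simp only [idx, hc] at h1 h2; omega
  rcases lt_trichotomy x.val y.val with h | h | h
  · have hle : clu p Δ x ≤ clu p Δ y := Nat.div_le_div_right (le_of_lt h)
    have h2 : clu p Δ x + 2 ≤ clu p Δ y := by omega
    rw [show x - y = -(y - x) by ring, ZMod.natAbs_valMinAbs_neg]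
    exact key_spacing hΔ h h2 hy.2.2.1
  · exact absurd (ZMod.val_injective p h) hne
  · have hle : clu p Δ y ≤ clu p Δ x := Nat.div_le_div_right (le_of_lt h)
    have h2 : clu p Δ y + 2 ≤ clu p Δ x := by omega
    exact key_spacing hΔ h h2 hx.2.2.1

lemma eset_dilate (hp : 2 ≤ p) {x y : ZMod p}
    (hc : clu p (Nat.sqrt p / 3 + 1) x = clu p (Nat.sqrt p / 3 + 1) y)
    (hne : x ≠ y) :
    Nat.sqrt p ≤
      ((Nat.sqrt p : ZMod p) * x - (Nat.sqrt p : ZMod p) * y).valMinAbs.natAbs := by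
  set ξ := Nat.sqrt p with hξ
  set Δ := ξ / 3 + 1 with hΔdef
  have hΔ : 0 < Δ := Nat.succ_pos _
  have key : ∀ a b : ZMod p, a.val < b.val → clu p Δ a = clu p Δ b →
      ξ ≤ ((ξ : ZMod p) * (b - a)).valMinAbs.natAbs := by
    intro a b hab hcl
    have h1 := clu_bounds hΔ (x := a)
    have h2 := clu_bounds hΔ (x := b)
    set m := b.val - a.val with hm
    have hm1 : 1 ≤ m := by omega
    have hm2 : m ≤ ξ / 3 := by rw [hcl] at h1; omega
    have hsub : (b - a).val = m := ZMod.val_sub (le_of_lt hab)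
    have hcast : b - a = (m : ZMod p) := by rw [← hsub, ZMod.natCast_zmod_val]
    have h2' : (ξ : ZMod p) * (b - a) = ((ξ * m : ℕ) : ZMod p) := by
      rw [hcast]; push_cast; ring
    have hle3 : ξ * m ≤ p / 3 := by
      calc ξ * m ≤ ξ * (ξ / 3) := Nat.mul_le_mul_left _ hm2
      _ ≤ ξ * ξ / 3 := Nat.mul_div_le_mul_div_assoc _ _ _
      _ ≤ p / 3 := Nat.div_le_div_right (Nat.sqrt_le p)
    have hle2 : ξ * m ≤ p / 2 := le_trans hle3 (Nat.div_le_div_left (by norm_num) (by norm_num))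
    have hltp : ξ * m < p := lt_of_le_of_lt hle3 (Nat.div_lt_self (by omega) (by norm_num))
    rw [h2', ZMod.valMinAbs_def_pos, ZMod.val_cast_of_lt hltp, if_pos hle2]
    simp only [Int.natAbs_natCast]
    calc ξ = ξ * 1 := (mul_one ξ).symm
    _ ≤ ξ * m := Nat.mul_le_mul_left _ hm1
  rcases lt_trichotomy x.val y.val with h | h | h
  · rw [show (ξ : ZMod p) * x - (ξ : ZMod p) * y = -((ξ : ZMod p) * (y - x)) by ring,
      ZMod.natAbs_valMinAbs_neg]
    exact key x y h hc
  · exact absurd (ZMod.val_injective p h) hne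
  · rw [show (ξ : ZMod p) * x - (ξ : ZMod p) * y = (ξ : ZMod p) * (x - y) by ring]
    exact key y x h hc.symm

end

end Stmt7Aux

open Stmt7Aux in
/-- decomposition of an arbitrary set `S ⊆ 𝔽_p` into large
`√p/3`-spaced pieces `D_k` and pieces `E_ℓ` whose dilates `ξE_ℓ` (with
`ξ = ⌊√p⌋`) are `√p/3`-spaced, covering all but `2p^{-κ}·#S` elements. -/
theorem stmt_7 (p : ℕ) [Fact p.Prime] (hp : 37 ≤ p) (κ : ℝ) (hκ : 0 < κ)
    (S : Finset (ZMod p)) (hS : 16 * (p : ℝ) ^ (2 * κ) ≤ (S.card : ℝ)) :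
    ∃ (K L : ℕ) (D : Fin K → Finset (ZMod p)) (E : Fin L → Finset (ZMod p)),
      (∀ k, D k ⊆ S) ∧ (∀ l, E l ⊆ S) ∧
      (∀ k k', k ≠ k' → Disjoint (D k) (D k')) ∧
      (∀ l l', l ≠ l' → Disjoint (E l) (E l')) ∧
      (∀ k l, Disjoint (D k) (E l)) ∧
      (∀ k, 0.25 * (p : ℝ) ^ (-κ) * Real.sqrt (S.card : ℝ) ≤ ((D k).card : ℝ)) ∧
      (∀ l, 0.25 * (p : ℝ) ^ (-κ) * Real.sqrt (S.card : ℝ) ≤ ((E l).card : ℝ)) ∧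
      (∀ k, ∀ d₁ ∈ D k, ∀ d₂ ∈ D k, d₁ ≠ d₂ →
        Real.sqrt p / 3 ≤ (|(d₁ - d₂).valMinAbs| : ℝ)) ∧
      (∀ l, ∀ e₁ ∈ E l, ∀ e₂ ∈ E l, e₁ ≠ e₂ →
        Real.sqrt p / 3 ≤
          (|(((Nat.sqrt p : ZMod p)) * e₁ - ((Nat.sqrt p : ZMod p)) * e₂).valMinAbs| : ℝ)) ∧
      (((S \ ((Finset.univ.biUnion D) ∪ (Finset.univ.biUnion E))).card : ℝ)
        ≤ 2 * (p : ℝ) ^ (-κ) * (S.card : ℝ)) := by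
  classical
  have hp0 : 0 < p := by omega
  haveI : NeZero p := ⟨by omega⟩
  set ξ := Nat.sqrt p with hξdef
  set Δ := ξ / 3 + 1 with hΔdef
  have hΔ : 0 < Δ := Nat.succ_pos _
  have hξ6 : 6 ≤ ξ := Nat.le_sqrt.2 (by omega)
  set s := S.card with hs
  set P := (p : ℝ) ^ (-κ) with hPdef
  set Q := (p : ℝ) ^ κ with hQdef
  have hppos : (0:ℝ) < p := by exact_mod_cast hp0
  have hPpos : (0:ℝ) < P := Real.rpow_pos_of_pos hppos _
  have hQpos : (0:ℝ) < Q := Real.rpow_pos_of_pos hppos _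
  have hP1 : P ≤ 1 :=
    Real.rpow_le_one_of_one_le_of_nonpos (by exact_mod_cast hp0) (by linarith)
  have hQ1 : (1:ℝ) ≤ Q :=
    Real.one_le_rpow (by exact_mod_cast hp0) (le_of_lt hκ)
  have hPQ : P * Q = 1 := by
    rw [hPdef, hQdef, ← Real.rpow_add hppos]; simp
  set T : ℝ := 0.25 * P * Real.sqrt s with hT
  have hs0 : (0:ℝ) < s := by
    have h2 : (0:ℝ) < (p:ℝ) ^ (2*κ) := Real.rpow_pos_of_pos hppos _
    linarith
  have hsnat : 0 < s := by exact_mod_cast hs0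
  have hsqs : Real.sqrt s * Real.sqrt s = s := Real.mul_self_sqrt (le_of_lt hs0)
  have hsq4 : 4 * Q ≤ Real.sqrt s := by
    have h2 : 16 * (p:ℝ) ^ (2*κ) = (4*Q) * (4*Q) := by
      rw [hQdef, two_mul, Real.rpow_add hppos]; ring
    have h3 : Real.sqrt ((4*Q)*(4*Q)) ≤ Real.sqrt s := by
      apply Real.sqrt_le_sqrt; rw [← h2]; exact hS
    rwa [Real.sqrt_mul_self (by positivity)] at h3
  have hsqpos : 0 < Real.sqrt s := Real.sqrt_pos.2 hs0
  have hT0 : 0 < T := by rw [hT]; positivity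
  -- √p bounds
  have hsplt : Real.sqrt p < (ξ:ℝ) + 1 := by
    rw [show ((ξ:ℝ) + 1) = ((ξ+1 : ℕ) : ℝ) by push_cast; ring]
    apply (Real.sqrt_lt' (by positivity)).2
    exact_mod_cast Nat.lt_succ_sqrt' p
  have hsp3ξ : Real.sqrt p / 3 ≤ (ξ:ℝ) := by
    have h6 : (6:ℝ) ≤ (ξ:ℝ) := by exact_mod_cast hξ6
    linarith
  have hsp3Δ : Real.sqrt p / 3 ≤ (Δ:ℝ) := by
    have h3 : ξ + 1 ≤ 3 * Δ := by omega
    have h3' : ((ξ:ℝ) + 1) ≤ 3 * (Δ:ℝ) := by exact_mod_cast h3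
    linarith
  -- index sets
  set KD := (Finset.range (2*s)).filter
      (fun n => T ≤ ((Dset p Δ S T n).card : ℝ)) with hKDdef
  set KE := (Finset.range p).filter (fun j => heavy p Δ S T j) with hKEdef
  refine ⟨KD.card, KE.card,
    fun k => Dset p Δ S T ((KD.equivFin.symm k : ℕ)),
    fun l => Eset p Δ S ((KE.equivFin.symm l : ℕ)), ?_, ?_, ?_, ?_, ?_, ?_, ?_, ?_, ?_, ?_⟩
  · intro k; exact Finset.filter_subset _ _
  · intro l; exact Finset.filter_subset _ _
  · -- D disjoint
    intro k k' hkk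
    have hne : ((KD.equivFin.symm k : ℕ)) ≠ ((KD.equivFin.symm k' : ℕ)) := by
      intro h
      exact hkk (KD.equivFin.symm.injective (Subtype.ext h))
    rw [Finset.disjoint_left]
    intro x hx hx'
    rw [mem_Dset] at hx hx'
    exact hne (hx.2.2.2 ▸ hx'.2.2.2 ▸ rfl)
  · -- E disjoint
    intro l l' hll
    have hne : ((KE.equivFin.symm l : ℕ)) ≠ ((KE.equivFin.symm l' : ℕ)) := by
      intro h
      exact hll (KE.equivFin.symm.injective (Subtype.ext h))
    rw [Finset.disjoint_left]
    intro x hx hx'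
    simp only [Eset, Finset.mem_filter] at hx hx'
    exact hne (hx.2 ▸ hx'.2 ▸ rfl)
  · -- D vs E disjoint
    intro k l
    rw [Finset.disjoint_left]
    intro x hx hx'
    rw [mem_Dset] at hx
    simp only [Eset, Finset.mem_filter] at hx'
    have hmem := Finset.mem_filter.1 (KE.equivFin.symm l).2
    exact hx.2.1 (hx'.2 ▸ hmem.2)
  · -- D card
    intro k
    exact (Finset.mem_filter.1 (KD.equivFin.symm k).2).2
  · -- E card
    intro l
    exact (Finset.mem_filter.1 (KE.equivFin.symm l).2).2
  · -- D spacing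
    intro k d₁ h₁ d₂ h₂ hne
    have hkey : Δ ≤ (d₁ - d₂).valMinAbs.natAbs := dset_spaced hΔ h₁ h₂ hne
    rw [← Int.cast_abs, Int.abs_eq_natAbs, Int.cast_natCast]
    have h' : (Δ:ℝ) ≤ ((d₁ - d₂).valMinAbs.natAbs : ℝ) := by exact_mod_cast hkey
    linarith
  · -- E dilate spacing
    intro l e₁ h₁ e₂ h₂ hne
    simp only [Eset, Finset.mem_filter] at h₁ h₂
    have hkey : ξ ≤ ((ξ : ZMod p) * e₁ - (ξ : ZMod p) * e₂).valMinAbs.natAbs :=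
      eset_dilate (by omega) (h₁.2.trans h₂.2.symm) hne
    rw [← Int.cast_abs, Int.abs_eq_natAbs, Int.cast_natCast]
    have h' : (ξ:ℝ) ≤ (((ξ : ZMod p) * e₁ - (ξ : ZMod p) * e₂).valMinAbs.natAbs : ℝ) := by
      exact_mod_cast hkey
    linarith
  · -- leftover bound
    set B := S.filter (fun x => ¬ heavy p Δ S T (clu p Δ x) ∧ ¬ good p Δ (clu p Δ x)) with hBdef
    set G := S.filter (fun x => ¬ heavy p Δ S T (clu p Δ x) ∧ good p Δ (clu p Δ x) ∧
        idx p Δ S x ∉ KD) with hGdef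
    have hcover : S \ (Finset.univ.biUnion (fun k => Dset p Δ S T ((KD.equivFin.symm k : ℕ))) ∪
        Finset.univ.biUnion (fun l => Eset p Δ S ((KE.equivFin.symm l : ℕ)))) ⊆ B ∪ G := by
      intro x hx
      rw [Finset.mem_sdiff] at hx
      obtain ⟨hxS, hxn⟩ := hx
      by_cases hh : heavy p Δ S T (clu p Δ x)
      · exfalso; apply hxn
        have hjlt : clu p Δ x < p :=
          Nat.lt_of_le_of_lt (Nat.div_le_self _ _) (ZMod.val_lt x)
        have hjKE : clu p Δ x ∈ KE := Finset.mem_filter.2 ⟨Finset.mem_range.2 hjlt, hh⟩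
        refine Finset.mem_union_right _ (Finset.mem_biUnion.2
          ⟨KE.equivFin ⟨_, hjKE⟩, Finset.mem_univ _, ?_⟩)
        have heq : ((KE.equivFin.symm (KE.equivFin ⟨clu p Δ x, hjKE⟩) : ℕ)) = clu p Δ x := by
          rw [Equiv.symm_apply_apply]
        rw [heq]
        exact Finset.mem_filter.2 ⟨hxS, rfl⟩
      · by_cases hg : good p Δ (clu p Δ x)
        · by_cases hkd : idx p Δ S x ∈ KD
          · exfalso; apply hxn
            refine Finset.mem_union_left _ (Finset.mem_biUnion.2
              ⟨KD.equivFin ⟨_, hkd⟩, Finset.mem_univ _, ?_⟩)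
            have heq : ((KD.equivFin.symm (KD.equivFin ⟨idx p Δ S x, hkd⟩) : ℕ)) = idx p Δ S x := by
              rw [Equiv.symm_apply_apply]
            rw [heq, mem_Dset]
            exact ⟨hxS, hh, hg, rfl⟩
          · exact Finset.mem_union_right _ (Finset.mem_filter.2 ⟨hxS, hh, hg, hkd⟩)
        · exact Finset.mem_union_left _ (Finset.mem_filter.2 ⟨hxS, hh, hg⟩)
    have hcard1 : ((S \ (Finset.univ.biUnion (fun k => Dset p Δ S T ((KD.equivFin.symm k : ℕ))) ∪
        Finset.univ.biUnion (fun l => Eset p Δ S ((KE.equivFin.symm l : ℕ))))).card : ℝ)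
        ≤ (B.card : ℝ) + (G.card : ℝ) := by
      have h1 := Finset.card_le_card hcover
      have h2 := Finset.card_union_le B G
      exact_mod_cast le_trans h1 h2
    -- bound on B
    set jm := (p - 1) / Δ with hjm
    have hBsub : B ⊆ B.filter (fun x => clu p Δ x = jm - 1) ∪
        B.filter (fun x => clu p Δ x = jm) := by
      intro x hx
      have hx' := Finset.mem_filter.1 hx
      have hcle : clu p Δ x ≤ jm := Nat.div_le_div_right (by have := ZMod.val_lt x; omega)
      have hbad : ¬ ((clu p Δ x + 2) * Δ ≤ p + 1) := hx'.2.2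
      have hjmΔ : jm * Δ ≤ p - 1 := Nat.div_mul_le_self _ _
      have hge : jm - 1 ≤ clu p Δ x := by
        by_contra hlt
        push_neg at hlt
        have h2 : clu p Δ x + 2 ≤ jm := by omega
        have h3 : (clu p Δ x + 2) * Δ ≤ jm * Δ := Nat.mul_le_mul_right _ h2
        simp only [add_mul] at h3 hbad
        omega
      rw [Finset.mem_union]
      have : clu p Δ x = jm - 1 ∨ clu p Δ x = jm := by omega
      rcases this with h | h
      · exact Or.inl (Finset.mem_filter.2 ⟨hx, h⟩)
      · exact Or.inr (Finset.mem_filter.2 ⟨hx, h⟩)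
    have hfibB : ∀ j : ℕ, ((B.filter (fun x => clu p Δ x = j)).card : ℝ) ≤ T := by
      intro j
      rcases (B.filter (fun x => clu p Δ x = j)).eq_empty_or_nonempty with he | ⟨x, hx⟩
      · rw [he]; simpa using le_of_lt hT0
      · have hx' := Finset.mem_filter.1 hx
        have hxB := Finset.mem_filter.1 hx'.1
        have hlight : ¬ (T ≤ ((Eset p Δ S j).card : ℝ)) := by
          rw [← hx'.2]; exact hxB.2.1
        have hsub : B.filter (fun x => clu p Δ x = j) ⊆ Eset p Δ S j := by
          intro y hy
          have hy' := Finset.mem_filter.1 hy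
          exact Finset.mem_filter.2 ⟨(Finset.mem_filter.1 hy'.1).1, hy'.2⟩
        have hcle : ((B.filter (fun x => clu p Δ x = j)).card : ℝ) ≤
            ((Eset p Δ S j).card : ℝ) := by exact_mod_cast Finset.card_le_card hsub
        linarith [not_le.1 hlight]
    have hBcard : (B.card : ℝ) ≤ 2 * T := by
      have h1 := Finset.card_le_card hBsub
      have h2 := Finset.card_union_le (B.filter (fun x => clu p Δ x = jm - 1))
        (B.filter (fun x => clu p Δ x = jm))
      have hc : (B.card : ℝ) ≤ ((B.filter (fun x => clu p Δ x = jm - 1)).card : ℝ) +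
          ((B.filter (fun x => clu p Δ x = jm)).card : ℝ) := by
        exact_mod_cast le_trans h1 h2
      linarith [hfibB (jm - 1), hfibB jm]
    -- bound on G
    set M₀ := Nat.ceil (2 * T) with hM0
    have hidxlt : ∀ x ∈ G, idx p Δ S x ∈ Finset.range M₀ := by
      intro x hx
      have hx' := Finset.mem_filter.1 hx
      have hlight : ¬ (T ≤ ((Eset p Δ S (clu p Δ x)).card : ℝ)) := hx'.2.1
      have hrnk : rnk p Δ S x + 1 ≤ (Eset p Δ S (clu p Δ x)).card := by
        have hsub : S.filter (fun y => clu p Δ y = clu p Δ x ∧ y.val < x.val) ⊆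
            (Eset p Δ S (clu p Δ x)).erase x := by
          intro y hy
          have hy' := Finset.mem_filter.1 hy
          refine Finset.mem_erase.2 ⟨?_, Finset.mem_filter.2 ⟨hy'.1, hy'.2.1⟩⟩
          intro hxy
          rw [hxy] at hy'
          exact lt_irrefl _ hy'.2.2
        have h1 := Finset.card_le_card hsub
        have h2 : ((Eset p Δ S (clu p Δ x)).erase x).card =
            (Eset p Δ S (clu p Δ x)).card - 1 :=
          Finset.card_erase_of_mem (Finset.mem_filter.2 ⟨hx'.1, rfl⟩)
        have h3 : 0 < (Eset p Δ S (clu p Δ x)).card :=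
          Finset.card_pos.2 ⟨x, Finset.mem_filter.2 ⟨hx'.1, rfl⟩⟩
        simp only [rnk]
        omega
      have hcard : ((Eset p Δ S (clu p Δ x)).card : ℝ) < T := not_le.1 hlight
      have hrnkR : ((rnk p Δ S x : ℝ)) + 1 < T := by
        have h4 : ((rnk p Δ S x + 1 : ℕ) : ℝ) ≤ ((Eset p Δ S (clu p Δ x)).card : ℝ) := by
          exact_mod_cast hrnk
        push_cast at h4; linarith
      have hidxR : ((idx p Δ S x : ℝ)) < 2 * T := by
        have hmod : (clu p Δ x) % 2 ≤ 1 := Nat.le_of_lt_succ (Nat.mod_lt _ (by norm_num))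
        have h5 : (idx p Δ S x : ℝ) ≤ 1 + 2 * (rnk p Δ S x : ℝ) := by
          simp only [idx]; push_cast
          have h6 : ((clu p Δ x % 2 : ℕ) : ℝ) ≤ 1 := by exact_mod_cast hmod
          linarith
        linarith
      rw [Finset.mem_range]
      have hle : (idx p Δ S x : ℝ) < (M₀ : ℝ) := lt_of_lt_of_le hidxR (Nat.le_ceil _)
      exact_mod_cast hle
    have hGsum : G.card = ∑ n ∈ Finset.range M₀,
        (G.filter (fun x => idx p Δ S x = n)).card :=
      Finset.card_eq_sum_card_fiberwise hidxlt
    have hfibG : ∀ n ∈ Finset.range M₀,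
        ((G.filter (fun x => idx p Δ S x = n)).card : ℝ) ≤ T := by
      intro n hn
      rcases (G.filter (fun x => idx p Δ S x = n)).eq_empty_or_nonempty with he | ⟨x, hx⟩
      · rw [he]; simpa using le_of_lt hT0
      · have hx' := Finset.mem_filter.1 hx
        have hxG := Finset.mem_filter.1 hx'.1
        have hnKD : n ∉ KD := by rw [← hx'.2]; exact hxG.2.2.2
        have hsub : G.filter (fun x => idx p Δ S x = n) ⊆ Dset p Δ S T n := by
          intro y hy
          have hy' := Finset.mem_filter.1 hy
          have hyG := Finset.mem_filter.1 hy'.1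
          exact mem_Dset.2 ⟨hyG.1, hyG.2.1, hyG.2.2.1, hy'.2⟩
        have hn2s : n < 2 * s := by
          have hrnk2 : rnk p Δ S x ≤ s - 1 := by
            have hsub2 : S.filter (fun y => clu p Δ y = clu p Δ x ∧ y.val < x.val) ⊆
                S.erase x := by
              intro y hy
              have hy' := Finset.mem_filter.1 hy
              refine Finset.mem_erase.2 ⟨?_, hy'.1⟩
              intro hxy
              rw [hxy] at hy'
              exact absurd hy'.2.2 (lt_irrefl _)
            have h1 := Finset.card_le_card hsub2
            have h2 := Finset.card_erase_of_mem hxG.1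
            simp only [rnk]
            omega
          have hidn := hx'.2
          have hmod : (clu p Δ x) % 2 ≤ 1 := Nat.le_of_lt_succ (Nat.mod_lt _ (by norm_num))
          simp only [idx] at hidn
          omega
        have hnotbig : ¬ (T ≤ ((Dset p Δ S T n).card : ℝ)) := by
          intro hTn
          exact hnKD (Finset.mem_filter.2 ⟨Finset.mem_range.2 hn2s, hTn⟩)
        have hc : ((G.filter (fun x => idx p Δ S x = n)).card : ℝ) ≤
            ((Dset p Δ S T n).card : ℝ) := by exact_mod_cast Finset.card_le_card hsub
        linarith [not_le.1 hnotbig]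
    have hGcard : (G.card : ℝ) ≤ (M₀ : ℝ) * T := by
      have heq : (G.card : ℝ) = ∑ n ∈ Finset.range M₀,
          ((G.filter (fun x => idx p Δ S x = n)).card : ℝ) := by
        rw [hGsum]; push_cast; ring
      rw [heq]
      calc _ ≤ ∑ _n ∈ Finset.range M₀, T := Finset.sum_le_sum hfibG
      _ = (M₀:ℝ) * T := by rw [Finset.sum_const, Finset.card_range, nsmul_eq_mul]
    -- final arithmetic
    have h2T : (0:ℝ) ≤ 2 * T := by linarith
    have hM0le : (M₀ : ℝ) ≤ 2 * T + 1 := le_of_lt (Nat.ceil_lt_add_one h2T)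
    have h4Q : 4 * Q * Real.sqrt s ≤ (s:ℝ) := by
      calc 4 * Q * Real.sqrt s = (4 * Q) * Real.sqrt s := by ring
      _ ≤ Real.sqrt s * Real.sqrt s := mul_le_mul_of_nonneg_right hsq4 hsqpos.le
      _ = (s:ℝ) := hsqs
    have h5 : 4 * Real.sqrt s ≤ P * s := by
      calc 4 * Real.sqrt s = 4 * (P * Q) * Real.sqrt s := by rw [hPQ]; ring
      _ = P * (4 * Q * Real.sqrt s) := by ring
      _ ≤ P * s := mul_le_mul_of_nonneg_left h4Q hPpos.le
    have hmul2 : P * (P * (s:ℝ)) ≤ P * s := by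
      have := mul_le_mul_of_nonneg_right hP1 (mul_nonneg hPpos.le hs0.le)
      linarith
    have hT1 : T ≤ P * s / 16 := by
      have h6 := mul_le_mul_of_nonneg_left h5 hPpos.le
      rw [hT]; linarith
    have hTT : T * T ≤ P * s / 16 := by
      have h7 : T * T = 0.0625 * (P * P) * (Real.sqrt s * Real.sqrt s) := by rw [hT]; ring
      rw [hsqs] at h7
      linarith
    have hfinal : (B.card : ℝ) + (G.card : ℝ) ≤ 2 * P * s := by
      have h8 : (G.card : ℝ) ≤ (2*T+1) * T :=
        le_trans hGcard (mul_le_mul_of_nonneg_right hM0le hT0.le)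
      have h9 : (2*T+1) * T = 2*(T*T) + T := by ring
      have h10 : (0:ℝ) ≤ P * s := mul_nonneg hPpos.le hs0.le
      linarith
    exact le_trans hcard1 hfinal
end

section
/- Let $p \geq 37$. Set $U = \sqrt{p}/3$ and $\xi = \lfloor \sqrt{p} \rfloor$. If $\mathcal{I} \subseteq \mathbb{F}_p$ is the image of an integer interval $[-\lfloor U \rfloor, \lfloor U \rfloor]$, then the dilated set $\xi \mathcal{I} = \{\xi x : x \in \mathcal{I}\}$ is $U$-spaced: any two distinct elements $y_1, y_2 \in \xi\mathcal{I}$ satisfy $|y_1 - y_2| \geq U$, where $|y|$ denotes the minimal absolute value of an integer representative of $y$ modulo $p$. -/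
/-- for `p ≥ 37`, `U = √p/3` and `ξ = ⌊√p⌋`, the dilate by `ξ` of the
interval `[-⌊U⌋, ⌊U⌋] ⊆ 𝔽_p` is `U`-spaced. -/
theorem stmt_8 (p : ℕ) [Fact p.Prime] (hp : 37 ≤ p) :
    ∀ z₁ z₂ : ℤ, |z₁| ≤ ⌊Real.sqrt p / 3⌋ → |z₂| ≤ ⌊Real.sqrt p / 3⌋ →
      ((Nat.sqrt p : ZMod p)) * (z₁ : ZMod p) ≠ ((Nat.sqrt p : ZMod p)) * (z₂ : ZMod p) →
      Real.sqrt p / 3 ≤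
        (|(((Nat.sqrt p : ZMod p)) * (z₁ : ZMod p)
            - ((Nat.sqrt p : ZMod p)) * (z₂ : ZMod p)).valMinAbs| : ℝ) := by
  intro z₁ z₂ h1 h2 hne
  have hppos : 0 < p := by omega
  have hp36 : (36:ℝ) ≤ (p:ℝ) := by exact_mod_cast (by omega : 36 ≤ p)
  have hs6 : (6:ℝ) ≤ Real.sqrt p := by
    have : Real.sqrt 36 ≤ Real.sqrt p := Real.sqrt_le_sqrt hp36
    rwa [show (36:ℝ) = 6^2 by norm_num, Real.sqrt_sq (by norm_num : (0:ℝ) ≤ 6)] at this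
  have hsq : Real.sqrt p * Real.sqrt p = (p:ℝ) :=
    Real.mul_self_sqrt (by positivity)
  set ξ : ℕ := Nat.sqrt p with hξdef
  set d : ℤ := z₁ - z₂ with hddef
  set x : ZMod p := (ξ:ZMod p) * z₁ - (ξ:ZMod p) * z₂ with hxdef
  set v : ℤ := x.valMinAbs with hvdef
  have hxcast : x = (((ξ:ℤ) * d : ℤ) : ZMod p) := by
    rw [hxdef, hddef]; push_cast; ring
  have hvne : v ≠ 0 := by
    rw [hvdef, Ne, ZMod.valMinAbs_eq_zero, hxdef, sub_eq_zero]
    exact hne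
  have hcong : ((v : ZMod p)) = (((ξ:ℤ) * d : ℤ) : ZMod p) := by
    rw [hvdef, ZMod.coe_valMinAbs, hxcast]
  have hdvd : (p:ℤ) ∣ (ξ:ℤ) * d - v :=
    (Int.ModEq.dvd ((ZMod.intCast_eq_intCast_iff _ _ _).mp hcong))
  obtain ⟨k, hk⟩ := hdvd
  -- bounds
  have h2v : 2 * |v| ≤ (p:ℤ) := by
    have h := ZMod.natAbs_valMinAbs_le x
    have : (v.natAbs : ℤ) ≤ ((p / 2 : ℕ) : ℤ) := by exact_mod_cast h
    rw [Int.abs_eq_natAbs]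
    have h2 : ((p / 2 : ℕ) : ℤ) * 2 ≤ (p:ℤ) := by exact_mod_cast Nat.div_mul_le_self p 2
    omega
  have hfloor : ((⌊Real.sqrt p / 3⌋ : ℤ) : ℝ) ≤ Real.sqrt p / 3 := Int.floor_le _
  have hdabs : |d| ≤ 2 * ⌊Real.sqrt p / 3⌋ := by
    calc |d| ≤ |z₁| + |z₂| := abs_sub _ _
    _ ≤ 2 * ⌊Real.sqrt p / 3⌋ := by omega
  have hdabsR : (|d| : ℝ) ≤ 2 * (Real.sqrt p / 3) := by
    have : ((|d|:ℤ):ℝ) ≤ ((2 * ⌊Real.sqrt p / 3⌋ : ℤ) : ℝ) := by exact_mod_cast hdabs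
    push_cast at this
    linarith
  have hξle : (ξ:ℝ) ≤ Real.sqrt p := Real.nat_sqrt_le_real_sqrt
  have hξge : Real.sqrt p - 1 ≤ (ξ:ℝ) := by
    have := @Real.real_sqrt_le_nat_sqrt_succ p
    push_cast at this
    linarith
  have hξdR : |(ξ:ℝ) * (d:ℝ)| ≤ 2 * (p:ℝ) / 3 := by
    rw [abs_mul, abs_of_nonneg (by positivity : (0:ℝ) ≤ (ξ:ℝ))]
    calc (ξ:ℝ) * |(d:ℝ)| ≤ Real.sqrt p * (2 * (Real.sqrt p / 3)) := by
          apply mul_le_mul hξle _ (abs_nonneg _) (Real.sqrt_nonneg _)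
          · exact_mod_cast hdabsR
      _ = 2 * (p:ℝ) / 3 := by rw [mul_comm]; ring_nf; nlinarith [hsq]
  -- bound k
  have hvR : |(v:ℝ)| ≤ (p:ℝ) / 2 := by
    have : ((2 * |v| : ℤ) : ℝ) ≤ ((p:ℤ):ℝ) := by exact_mod_cast h2v
    push_cast at this
    linarith
  have hkR : (v:ℝ) = (ξ:ℝ) * (d:ℝ) - (p:ℝ) * (k:ℝ) := by
    have : ((v:ℤ):ℝ) = (((ξ:ℤ)*d:ℤ):ℝ) - (((p:ℤ)*k:ℤ):ℝ) := by
      rw [← Int.cast_sub]; congr 1; omega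
    push_cast at this
    linarith
  have hpR : (0:ℝ) < (p:ℝ) := by positivity
  have hkabs : |k| ≤ 1 := by
    by_contra hcontra
    push_neg at hcontra
    have h2k : (2:ℝ) ≤ |(k:ℝ)| := by
      have : (2:ℤ) ≤ |k| := by omega
      calc (2:ℝ) = ((2:ℤ):ℝ) := by norm_num
        _ ≤ ((|k|:ℤ):ℝ) := by exact_mod_cast this
        _ = |(k:ℝ)| := by push_cast; simp
    have habsk : |(p:ℝ) * (k:ℝ)| ≤ |(ξ:ℝ) * (d:ℝ)| + |(v:ℝ)| := by
      have h1 : |(p:ℝ)*(k:ℝ)| = |(ξ:ℝ)*(d:ℝ) - (v:ℝ)| := by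
        congr 1
        rw [hkR]; ring
      rw [h1]
      exact abs_sub _ _
    rw [abs_mul, abs_of_nonneg hpR.le] at habsk
    nlinarith
  -- final goal
  have hple : Real.sqrt p ≤ (p:ℝ) := by nlinarith
  have hgoal : Real.sqrt p / 3 ≤ |(v:ℝ)| := by
    have hk1 : -1 ≤ k := neg_le_of_abs_le hkabs
    have hk2 : k ≤ 1 := le_of_abs_le hkabs
    interval_cases k
    · -- k = -1 : v = ξd + p
      have hvval : (v:ℝ) = (ξ:ℝ)*(d:ℝ) + (p:ℝ) := by rw [hkR]; push_cast; ring
      rw [abs_le] at hξdR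
      have h3 : (p:ℝ)/3 ≤ (v:ℝ) := by rw [hvval]; linarith
      have := le_abs_self (v:ℝ)
      linarith
    · -- k = 0 : v = ξd, d ≠ 0
      have hdne : d ≠ 0 := by
        intro h0
        apply hvne
        have hz : (ξ:ℤ) * d = 0 := by rw [h0]; ring
        omega
      have hd1 : (1:ℝ) ≤ |(d:ℝ)| := by
        have h1d : (1:ℤ) ≤ |d| := Int.one_le_abs hdne
        calc (1:ℝ) = ((1:ℤ):ℝ) := by norm_num
          _ ≤ ((|d|:ℤ):ℝ) := by exact_mod_cast h1d
          _ = |(d:ℝ)| := by push_cast; rfl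
      have hv : |(v:ℝ)| = (ξ:ℝ) * |(d:ℝ)| := by
        have : (v:ℝ) = (ξ:ℝ)*(d:ℝ) := by rw [hkR]; push_cast; ring
        rw [this, abs_mul, abs_of_nonneg (show (0:ℝ) ≤ (ξ:ℝ) by positivity)]
      rw [hv]
      nlinarith
    · -- k = 1 : v = ξd - p
      have hvval : (v:ℝ) = (ξ:ℝ)*(d:ℝ) - (p:ℝ) := by rw [hkR]; push_cast; ring
      rw [abs_le] at hξdR
      have h3 : (p:ℝ)/3 ≤ -(v:ℝ) := by rw [hvval]; linarith
      have := neg_le_abs (v:ℝ)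
      linarith
  exact_mod_cast hgoal
end

section
/- Let $P, Q \in \mathbb{Z}[Z]$ be nonzero univariate integer polynomials with $Q \mid P$ in $\mathbb{Z}[Z]$. If all coefficients of $P$ have absolute value at most $e^H$ with $H \geq 1$, then all coefficients of $Q$ have absolute value at most $e^{H + C}$, where $C$ is a constant depending only on $\deg P$. -/
open Polynomial Finset

noncomputable def l1 (p : ℚ[X]) : ℚ := ∑ i ∈ p.support, |p.coeff i|

lemma l1_nonneg (p : ℚ[X]) : 0 ≤ l1 p :=
  Finset.sum_nonneg fun _ _ => abs_nonneg _

lemma abs_coeff_le_l1 (p : ℚ[X]) (i : ℕ) : |p.coeff i| ≤ l1 p := by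
  by_cases h : i ∈ p.support
  · exact Finset.single_le_sum (f := fun j => |p.coeff j|) (fun _ _ => abs_nonneg _) h
  · rw [Polynomial.notMem_support_iff.mp h, abs_zero]; exact l1_nonneg p

lemma l1_eq_sum_range (p : ℚ[X]) {N : ℕ} (h : p.natDegree < N) :
    l1 p = ∑ i ∈ Finset.range N, |p.coeff i| := by
  refine Finset.sum_subset (p.supp_subset_range h) fun i _ hi => ?_
  rw [Polynomial.notMem_support_iff.mp hi, abs_zero]

lemma l1_one : l1 (1 : ℚ[X]) = 1 := by
  rw [l1_eq_sum_range (1 : ℚ[X]) (N := 1) (by simp)]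
  simp

lemma l1_mul_le (p q : ℚ[X]) : l1 (p * q) ≤ l1 p * l1 q := by
  set N := p.natDegree + q.natDegree + 1 with hN
  have hpq : (p * q).natDegree < N := lt_of_le_of_lt (Polynomial.natDegree_mul_le) (by omega)
  rw [l1_eq_sum_range (p*q) hpq, l1_eq_sum_range p (N := N) (by omega),
    l1_eq_sum_range q (N := N) (by omega)]
  calc ∑ n ∈ range N, |(p*q).coeff n|
      ≤ ∑ n ∈ range N, ∑ x ∈ Finset.HasAntidiagonal.antidiagonal n, |p.coeff x.1| * |q.coeff x.2| := by
        refine Finset.sum_le_sum fun n _ => ?_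
        rw [Polynomial.coeff_mul]
        exact (Finset.abs_sum_le_sum_abs _ _).trans (le_of_eq (by simp [abs_mul]))
    _ = ∑ x ∈ (range N).biUnion Finset.HasAntidiagonal.antidiagonal, |p.coeff x.1| * |q.coeff x.2| := by
        rw [Finset.sum_biUnion]
        intro a _ b _ hab
        simp only [Finset.disjoint_left]
        intro x hx hx'
        rw [Finset.HasAntidiagonal.mem_antidiagonal] at hx hx'
        exact hab (hx ▸ hx')
    _ ≤ ∑ x ∈ range N ×ˢ range N, |p.coeff x.1| * |q.coeff x.2| := by
        refine Finset.sum_le_sum_of_subset_of_nonneg ?_ fun _ _ _ =>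
          mul_nonneg (abs_nonneg _) (abs_nonneg _)
        intro x hx
        simp only [Finset.mem_biUnion, Finset.mem_range, Finset.HasAntidiagonal.mem_antidiagonal] at hx
        obtain ⟨n, hn, hxn⟩ := hx
        simp only [Finset.mem_product, Finset.mem_range]
        omega
    _ = (∑ i ∈ range N, |p.coeff i|) * ∑ j ∈ range N, |q.coeff j| := by
        rw [Finset.sum_product, Finset.sum_mul]
        exact Finset.sum_congr rfl fun i _ => by rw [Finset.mul_sum]

lemma l1_prod_le {ι : Type*} (t : Finset ι) (f : ι → ℚ[X]) (B : ℚ)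
    (hB : 0 ≤ B) (h : ∀ k ∈ t, l1 (f k) ≤ B) :
    l1 (∏ k ∈ t, f k) ≤ B ^ t.card := by
  induction t using Finset.cons_induction with
  | empty => simpa using le_of_eq l1_one
  | cons a t ha ih =>
    rw [Finset.prod_cons, Finset.card_cons, pow_succ']
    calc l1 (f a * ∏ k ∈ t, f k) ≤ l1 (f a) * l1 (∏ k ∈ t, f k) := l1_mul_le _ _
      _ ≤ B * B ^ t.card := by
          apply mul_le_mul (h a (Finset.mem_cons_self a t))
            (ih fun k hk => h k (Finset.mem_cons_of_mem hk)) (l1_nonneg _) hB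

lemma l1_C (c : ℚ) : l1 (C c) = |c| := by
  rw [l1_eq_sum_range (C c) (N := 1) (by simp)]
  simp

lemma l1_X_sub_C (y : ℚ) : l1 (X - C y) ≤ 1 + |y| := by
  rw [l1_eq_sum_range (X - C y) (N := 2) (by simp)]
  simp [Finset.sum_range_succ, add_comm]

lemma l1_basisDivisor (x y : ℚ) (h : 1 ≤ |x - y|) :
    l1 (Lagrange.basisDivisor x y) ≤ 1 + |y| := by
  refine (l1_mul_le _ _).trans ?_
  rw [l1_C, abs_inv]
  calc |x - y|⁻¹ * l1 (X - C y) ≤ 1 * (1 + |y|) := by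
        apply mul_le_mul _ (l1_X_sub_C y) (l1_nonneg _) zero_le_one
        rw [inv_le_one_iff₀]; right; exact h
    _ = 1 + |y| := one_mul _

lemma pigeonhole_block (P : ℤ[X]) (hP : P ≠ 0) (n : ℕ) (hn : P.natDegree ≤ n) :
    ∃ b ≤ n, ∀ j ≤ n, P.eval (((n+1)*b + j : ℕ) : ℤ) ≠ 0 := by
  by_contra hcon
  push_neg at hcon
  choose j hj hj0 using hcon
  set g : ℕ → ℤ := fun b => if h : b ≤ n then (((n+1)*b + j b h : ℕ) : ℤ) else 0 with hg
  have hmem : ∀ x ∈ Finset.range (n+1), g x ∈ P.roots.toFinset := by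
    intro x hx
    have hx' : x ≤ n := Nat.lt_succ_iff.mp (Finset.mem_range.mp hx)
    rw [hg]
    simp only [dif_pos hx']
    rw [Multiset.mem_toFinset, Polynomial.mem_roots']
    exact ⟨hP, hj0 x hx'⟩
  have hinj : Set.InjOn g (Finset.range (n+1)) := by
    intro a ha b hb hab
    have ha' : a ≤ n := Nat.lt_succ_iff.mp (Finset.mem_range.mp ha)
    have hb' : b ≤ n := Nat.lt_succ_iff.mp (Finset.mem_range.mp hb)
    rw [hg] at hab
    simp only [dif_pos ha', dif_pos hb'] at hab
    have h1 : ((n+1)*a + j a ha' : ℕ) = (n+1)*b + j b hb' := by exact_mod_cast hab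
    have h2 := congrArg (· / (n+1)) h1
    simp only [Nat.mul_add_div (Nat.succ_pos n),
      Nat.div_eq_of_lt (Nat.lt_succ_of_le (hj a ha')),
      Nat.div_eq_of_lt (Nat.lt_succ_of_le (hj b hb'))] at h2
    omega
  have hcard := Finset.card_le_card_of_injOn g hmem hinj
  rw [Finset.card_range] at hcard
  have := (Multiset.toFinset_card_le P.roots).trans ((P.card_roots').trans hn)
  omega

lemma eval_abs_le (P : ℤ[X]) (H : ℝ) (hc : ∀ i, (|P.coeff i| : ℝ) ≤ Real.exp H)
    (x : ℤ) (n : ℕ) (hn : P.natDegree ≤ n) (M : ℝ) (hM : 1 ≤ M) (hx : |(x : ℝ)| ≤ M) :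
    |((P.eval x : ℤ) : ℝ)| ≤ ((n : ℝ)+1) * (Real.exp H * M^n) := by
  have h0 : ((P.eval x : ℤ) : ℝ)
      = ∑ i ∈ Finset.range (P.natDegree+1), (P.coeff i : ℝ) * (x:ℝ)^i := by
    rw [Polynomial.eval_eq_sum_range (p := P) x]; push_cast; rfl
  rw [h0]
  calc |∑ i ∈ Finset.range (P.natDegree+1), (P.coeff i : ℝ) * (x:ℝ)^i|
      ≤ ∑ i ∈ Finset.range (P.natDegree+1), |(P.coeff i : ℝ) * (x:ℝ)^i| :=
        Finset.abs_sum_le_sum_abs _ _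
    _ ≤ ∑ i ∈ Finset.range (P.natDegree+1), Real.exp H * M^n := by
        refine Finset.sum_le_sum fun i hi => ?_
        rw [abs_mul]
        have h1 : |(x:ℝ)^i| ≤ M^n := by
          rw [abs_pow]
          exact (pow_le_pow_left₀ (abs_nonneg _) hx i).trans
            (pow_le_pow_right₀ hM (by simp at hi; omega))
        have h2 : (|P.coeff i| : ℝ) = |(P.coeff i : ℝ)| := by push_cast; rfl
        exact mul_le_mul (h2 ▸ hc i) h1 (abs_nonneg _) (Real.exp_pos H).le
    _ = ((P.natDegree : ℝ)+1) * (Real.exp H * M^n) := by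
        rw [Finset.sum_const, Finset.card_range, nsmul_eq_mul]; push_cast; ring
    _ ≤ ((n : ℝ)+1) * (Real.exp H * M^n) := by
        have : (0:ℝ) ≤ Real.exp H * M^n := by positivity
        apply mul_le_mul_of_nonneg_right _ this
        have : (P.natDegree : ℝ) ≤ n := Nat.cast_le.mpr hn
        linarith

theorem stmt_10' :
    ∃ C : ℕ → ℝ, ∀ (P Q : Polynomial ℤ) (H : ℝ), 1 ≤ H →
      P ≠ 0 → Q ≠ 0 → Q ∣ P →
      (∀ i : ℕ, (|P.coeff i| : ℝ) ≤ Real.exp H) →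
      ∀ i : ℕ, (|Q.coeff i| : ℝ) ≤ Real.exp (H + C P.natDegree) := by
  refine ⟨fun n => Real.log (((n:ℝ)+1) * (((n:ℝ)+1) * (((n:ℝ)+1)^2)^n) * (1+((n:ℝ)+1)^2)^n),
    fun P Q H hH hP hQ hQP hPc i => ?_⟩
  set n := P.natDegree with hn
  set M : ℝ := ((n:ℝ)+1)^2 with hM
  have hM1 : (1:ℝ) ≤ M := by rw [hM]; nlinarith [Nat.cast_nonneg (α := ℝ) n]
  -- choose block b
  obtain ⟨b, hb, hroot⟩ := pigeonhole_block P hP n le_rfl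
  set v : ℕ → ℚ := fun j => (((n+1)*b + j : ℕ) : ℚ) with hv
  have hvM : ∀ j ≤ n, ((n+1)*b + j : ℕ) ≤ (n+1)^2 := by
    intro j hj
    calc (n+1)*b + j ≤ (n+1)*n + n := by
          have := Nat.mul_le_mul_left (n+1) hb; omega
      _ ≤ (n+1)^2 := by ring_nf; omega
  have hinj : Set.InjOn v (Finset.range (n+1)) := by
    intro a ha c hc hac
    rw [hv] at hac
    simp only at hac
    have : ((n+1)*b + a : ℕ) = (n+1)*b + c := by exact_mod_cast hac
    omega
  set Qq : ℚ[X] := Q.map (Int.castRingHom ℚ) with hQq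
  have hdQ : Q.natDegree ≤ n := Polynomial.natDegree_le_of_dvd hQP hP
  have hdQq : Qq.natDegree ≤ n := Polynomial.natDegree_map_le.trans hdQ
  have hdeg : Qq.degree < (Finset.range (n+1)).card := by
    rw [Finset.card_range]
    refine lt_of_le_of_lt Polynomial.degree_le_natDegree ?_
    exact_mod_cast Nat.lt_succ_of_le hdQq
  have heq := Lagrange.eq_interpolate (v := v) hinj hdeg
  -- coefficient formula
  have hcoeff : Qq.coeff i = ∑ j ∈ Finset.range (n+1),
      Qq.eval (v j) * (Lagrange.basis (Finset.range (n+1)) v j).coeff i := by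
    conv_lhs => rw [heq]
    rw [Lagrange.interpolate_apply, Polynomial.finset_sum_coeff]
    exact Finset.sum_congr rfl fun j _ => by rw [Polynomial.coeff_C_mul]
  -- l1 bound on basis polynomials
  set Mq : ℚ := ((n:ℚ)+1)^2 with hMq
  have hbasis : ∀ j ∈ Finset.range (n+1),
      l1 (Lagrange.basis (Finset.range (n+1)) v j) ≤ (1+Mq)^n := by
    intro j hj
    have hcard : ((Finset.range (n+1)).erase j).card = n := by
      rw [Finset.card_erase_of_mem hj, Finset.card_range]
      omega
    have hB : (0:ℚ) ≤ 1 + Mq := by rw [hMq]; positivity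
    have hfac : ∀ k ∈ (Finset.range (n+1)).erase j,
        l1 (Lagrange.basisDivisor (v j) (v k)) ≤ 1 + Mq := by
      intro k hk
      have hkj : k ≠ j := Finset.ne_of_mem_erase hk
      have hkr : k ≤ n := Nat.lt_succ_iff.mp (Finset.mem_range.mp (Finset.mem_of_mem_erase hk))
      have hjr : j ≤ n := Nat.lt_succ_iff.mp (Finset.mem_range.mp hj)
      refine (l1_basisDivisor _ _ ?_).trans ?_
      · have : v j - v k = (((j:ℤ) - (k:ℤ) : ℤ) : ℚ) := by rw [hv]; push_cast; ring
        rw [this]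
        have : (1:ℤ) ≤ |(j:ℤ) - (k:ℤ)| :=
          Int.one_le_abs (sub_ne_zero.mpr (by exact_mod_cast hkj.symm))
        calc (1:ℚ) ≤ (|(j:ℤ) - (k:ℤ)| : ℚ) := by exact_mod_cast this
          _ = |(((j:ℤ) - (k:ℤ) : ℤ) : ℚ)| := by push_cast; rfl
      · have h1 : |v k| ≤ Mq := by
          rw [hv, hMq]
          rw [abs_of_nonneg (by positivity)]
          calc (((n+1)*b + k : ℕ) : ℚ) ≤ (((n+1)^2 : ℕ) : ℚ) := by
                exact_mod_cast hvM k hkr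
            _ = ((n:ℚ)+1)^2 := by push_cast; ring
        linarith
    have h := l1_prod_le ((Finset.range (n+1)).erase j)
      (fun k => Lagrange.basisDivisor (v j) (v k)) (1+Mq) hB hfac
    rw [hcard] at h
    exact h
  -- value bounds
  have hval : ∀ j ∈ Finset.range (n+1),
      |((Q.eval (((n+1)*b + j : ℕ) : ℤ) : ℤ) : ℝ)| ≤ ((n:ℝ)+1) * (Real.exp H * M^n) := by
    intro j hj
    have hjr : j ≤ n := Nat.lt_succ_iff.mp (Finset.mem_range.mp hj)
    set x : ℤ := (((n+1)*b + j : ℕ) : ℤ) with hx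
    have hPx : P.eval x ≠ 0 := hroot j hjr
    have hdvd : Q.eval x ∣ P.eval x := Polynomial.eval_dvd hQP
    have habs : |Q.eval x| ≤ |P.eval x| :=
      Int.le_of_dvd (abs_pos.mpr hPx) ((abs_dvd _ _).mpr ((dvd_abs _ _).mpr hdvd))
    have hxM : |(x:ℝ)| ≤ M := by
      rw [hx, hM]
      rw [abs_of_nonneg (by positivity)]
      calc ((((n+1)*b + j : ℕ) : ℤ) : ℝ) ≤ ((((n+1)^2 : ℕ) : ℤ) : ℝ) := by
            exact_mod_cast hvM j hjr
        _ = ((n:ℝ)+1)^2 := by push_cast; ring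
    calc |((Q.eval x : ℤ) : ℝ)| ≤ |((P.eval x : ℤ) : ℝ)| := by exact_mod_cast habs
      _ ≤ ((n:ℝ)+1) * (Real.exp H * M^n) := eval_abs_le P H hPc x n le_rfl M hM1 hxM
  -- evaluate Qq at nodes
  have hQqeval : ∀ j : ℕ, Qq.eval (v j) = ((Q.eval (((n+1)*b + j : ℕ) : ℤ) : ℤ) : ℚ) := by
    intro j
    have hcast : v j = ((((n+1)*b + j : ℕ) : ℤ) : ℚ) := by rw [hv]; push_cast; ring
    rw [hQq, hcast, Polynomial.eval_intCast_map, eq_intCast]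
    norm_cast
  -- assemble
  have hMqM : ((1 + Mq : ℚ) : ℝ) = 1 + M := by rw [hMq, hM]; push_cast; ring
  have key : (|Q.coeff i| : ℝ) ≤ ((n:ℝ)+1) * (((n:ℝ)+1) * (Real.exp H * M^n)) * (1+M)^n := by
    have h1 : (|Q.coeff i| : ℝ) = |((Qq.coeff i : ℚ) : ℝ)| := by
      rw [hQq, Polynomial.coeff_map, eq_intCast]
      push_cast
      rfl
    rw [h1, hcoeff]
    push_cast
    calc |∑ j ∈ Finset.range (n+1), ((Qq.eval (v j) : ℚ) : ℝ) *
          (((Lagrange.basis (Finset.range (n+1)) v j).coeff i : ℚ) : ℝ)|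
        ≤ ∑ j ∈ Finset.range (n+1), |((Qq.eval (v j) : ℚ) : ℝ)| *
          |(((Lagrange.basis (Finset.range (n+1)) v j).coeff i : ℚ) : ℝ)| := by
          refine (Finset.abs_sum_le_sum_abs _ _).trans (le_of_eq ?_)
          exact Finset.sum_congr rfl fun j _ => abs_mul _ _
      _ ≤ ∑ j ∈ Finset.range (n+1), (((n:ℝ)+1) * (Real.exp H * M^n)) * (1+M)^n := by
          refine Finset.sum_le_sum fun j hj => ?_
          refine mul_le_mul ?_ ?_ (abs_nonneg _) (by positivity)
          · rw [hQqeval j]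
            have := hval j hj
            calc |(((Q.eval (((n+1)*b + j : ℕ) : ℤ) : ℤ) : ℚ) : ℝ)|
                = |((Q.eval (((n+1)*b + j : ℕ) : ℤ) : ℤ) : ℝ)| := by push_cast; rfl
              _ ≤ _ := this
          · have h2 := (abs_coeff_le_l1 (Lagrange.basis (Finset.range (n+1)) v j) i).trans
              (hbasis j hj)
            calc |(((Lagrange.basis (Finset.range (n+1)) v j).coeff i : ℚ) : ℝ)|
                = ((|(Lagrange.basis (Finset.range (n+1)) v j).coeff i| : ℚ) : ℝ) := by
                  rw [Rat.cast_abs]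
              _ ≤ (((1+Mq)^n : ℚ) : ℝ) := by exact_mod_cast h2
              _ = (1+M)^n := by rw [Rat.cast_pow, hMqM]
      _ = ((n:ℝ)+1) * (((n:ℝ)+1) * (Real.exp H * M^n)) * (1+M)^n := by
          rw [Finset.sum_const, Finset.card_range, nsmul_eq_mul]
          push_cast; ring
  refine key.trans (le_of_eq ?_)
  rw [Real.exp_add, Real.exp_log (by positivity)]
  rw [hM]; ring


/-- a divisor `Q` of an integer polynomial `P` of logarithmic height
at most `H` has logarithmic height at most `H + C(deg P)`. -/
theorem stmt_10 :
    ∃ C : ℕ → ℝ, ∀ (P Q : Polynomial ℤ) (H : ℝ), 1 ≤ H →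
      P ≠ 0 → Q ≠ 0 → Q ∣ P →
      (∀ i : ℕ, (|P.coeff i| : ℝ) ≤ Real.exp H) →
      ∀ i : ℕ, (|Q.coeff i| : ℝ) ≤ Real.exp (H + C P.natDegree) := by
  exact stmt_10'
end
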